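/- arXiv:2301.08285 — 4 statements merged into one kernel-verified Lean document; each statement's English description precedes it below -/
import Mathlib

section
/- Let H = ⊕_{i∈I} H_i be a Hilbert space direct sum, π_i : A → B(H_i) *-representations, π = ⊕ π_i, and φ : A → B(H) a unital completely positive map such that P_i φ(t) P_i = π(t) P_i for every i ∈ I and t ∈ A, where P_i is the orthogonal projection onto H_i. Then φ = π. -/
/-- A linear map `φ` from a C*-algebra into `B(H)` is completely positive if all the
operator matrices `(φ(b_i* b_j))_{ij}` are positive, expressed via quadratic forms. -/
def IsCompletelyPositive {B H : Type*} [NormedRing B] [StarRing B] [CStarRing B]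
    [NormedAlgebra ℂ B] [StarModule ℂ B] [CompleteSpace B]
    [NormedAddCommGroup H] [InnerProductSpace ℂ H] [CompleteSpace H]
    (φ : B →L[ℂ] (H →L[ℂ] H)) : Prop :=
  ∀ (n : ℕ) (b : Fin n → B) (d : Fin n → (H →L[ℂ] H)),
    0 ≤ ∑ i, ∑ j, star (d i) * φ (star (b i) * b j) * d j

lemma cp_basic {B H : Type*} [NormedRing B] [StarRing B] [CStarRing B]
    [NormedAlgebra ℂ B] [StarModule ℂ B] [CompleteSpace B]
    [NormedAddCommGroup H] [InnerProductSpace ℂ H] [CompleteSpace H]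
    (φ : B →L[ℂ] (H →L[ℂ] H)) (hu : φ 1 = 1) (hcp : IsCompletelyPositive φ)
    (t : B) (c : H →L[ℂ] H) :
    0 ≤ star c * c + star c * φ t + φ (star t) * c + φ (star t * t) := by
  have h := hcp 2 ![1, t] ![c, 1]
  simpa [Fin.sum_univ_two, hu, mul_one, one_mul, add_assoc] using h

lemma cp_star {B H : Type*} [NormedRing B] [StarRing B] [CStarRing B]
    [NormedAlgebra ℂ B] [StarModule ℂ B] [CompleteSpace B]
    [NormedAddCommGroup H] [InnerProductSpace ℂ H] [CompleteSpace H]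
    (φ : B →L[ℂ] (H →L[ℂ] H)) (hu : φ 1 = 1) (hcp : IsCompletelyPositive φ)
    (t : B) : φ (star t) = star (φ t) := by
  have sa : ∀ c : H →L[ℂ] H,
      IsSelfAdjoint (star c * c + star c * φ t + φ (star t) * c + φ (star t * t)) :=
    fun c => ((ContinuousLinearMap.nonneg_iff_isPositive _).mp
      (cp_basic φ hu hcp t c)).isSelfAdjoint
  have sq : IsSelfAdjoint (φ (star t * t)) := by simpa using sa 0
  have h1 := (sa 1).star_eq
  have h2 := (sa (Complex.I • 1)).star_eq
  simp only [star_add, star_mul, star_one, star_smul, star_star, one_mul, mul_one,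
    smul_mul_assoc, mul_smul_comm, sq.star_eq] at h1 h2
  simp only [Complex.star_def, Complex.conj_I, smul_smul, smul_neg, neg_mul, Complex.I_mul_I,
    neg_neg, one_smul, neg_smul] at h2
  have key : (2 * Complex.I) • star (φ t) = (2 * Complex.I) • φ (star t) := by
    linear_combination (norm := module) Complex.I • h1 + h2
  exact (smul_right_injective _ (mul_ne_zero two_ne_zero Complex.I_ne_zero) key).symm

lemma cp_schwarz {B H : Type*} [NormedRing B] [StarRing B] [CStarRing B]
    [NormedAlgebra ℂ B] [StarModule ℂ B] [CompleteSpace B]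
    [NormedAddCommGroup H] [InnerProductSpace ℂ H] [CompleteSpace H]
    (φ : B →L[ℂ] (H →L[ℂ] H)) (hu : φ 1 = 1) (hcp : IsCompletelyPositive φ)
    (t : B) (ξ : H) : ‖φ t ξ‖ ^ 2 ≤ RCLike.re (inner ℂ (φ (star t * t) ξ) ξ : ℂ) := by
  have h := cp_basic φ hu hcp t (-(φ t))
  rw [cp_star φ hu hcp t] at h
  have h' : 0 ≤ φ (star t * t) - star (φ t) * φ t := by
    have : star (-(φ t)) * -(φ t) + star (-(φ t)) * φ t + star (φ t) * -(φ t) + φ (star t * t)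
        = φ (star t * t) - star (φ t) * φ t := by noncomm_ring
    rwa [this] at h
  have hp := (ContinuousLinearMap.nonneg_iff_isPositive _).mp h'
  have := hp.re_inner_nonneg_left ξ
  rw [ContinuousLinearMap.sub_apply, inner_sub_left, map_sub] at this
  have hst : RCLike.re (inner ℂ ((star (φ t) * φ t) ξ) ξ : ℂ) = ‖φ t ξ‖ ^ 2 := by
    rw [ContinuousLinearMap.mul_apply, ContinuousLinearMap.star_eq_adjoint,
      ContinuousLinearMap.adjoint_inner_left]
    exact inner_self_eq_norm_sq _
  linarith [this, hst.ge, hst.le]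

/-- If `H = ⊕_{i∈I} H_i` (expressed via a family of mutually orthogonal projections `P i`
summing to the identity), `π` is a ⋆-representation which is the direct sum of
representations on the summands (it commutes with each `P i`), and `φ` is a unital
completely positive map whose compression to each summand agrees with `π`
(`P_i φ(t) P_i = π(t) P_i`), then `φ = π`. -/
theorem stmt5 {A H I : Type*} [NormedRing A] [StarRing A] [CStarRing A]
    [NormedAlgebra ℂ A] [StarModule ℂ A] [CompleteSpace A]
    [NormedAddCommGroup H] [InnerProductSpace ℂ H] [CompleteSpace H]
    (P : I → (H →L[ℂ] H))
    (hPsa : ∀ i, star (P i) = P i) (hPidem : ∀ i, P i * P i = P i)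
    (hPorth : ∀ i j, i ≠ j → P i * P j = 0)
    (hPsum : ∀ ξ : H, HasSum (fun i => P i ξ) ξ)
    (π : A →⋆ₐ[ℂ] (H →L[ℂ] H)) (hπu : π 1 = 1)
    (hcomm : ∀ i t, π t * P i = P i * π t)
    (φ : A →L[ℂ] (H →L[ℂ] H)) (hu : φ 1 = 1) (hcp : IsCompletelyPositive φ)
    (hblock : ∀ i t, P i * φ t * P i = π t * P i) :
    ∀ t : A, φ t = π t := by
  intro t
  have hstep : ∀ (i : I) (ξ : H), φ t (P i ξ) = π t (P i ξ) := by
    intro i ξ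
    set p := P i with hp
    have hpadj : ContinuousLinearMap.adjoint p = p := by
      rw [← ContinuousLinearMap.star_eq_adjoint]; exact hPsa i
    set η := p ξ with hη
    have hpη : p η = η := by
      rw [hη, ← ContinuousLinearMap.mul_apply, hPidem i]
    -- moving p across the inner product
    have hmove : ∀ u x : H, (inner ℂ u (p x) : ℂ) = inner ℂ (p u) x := by
      intro u x
      rw [← hpadj, ContinuousLinearMap.adjoint_inner_right, hpadj]
    -- ⟪φ(t*t) η, η⟫ = ‖π t η‖²
    have hval : RCLike.re (inner ℂ (φ (star t * t) η) η : ℂ) = ‖π t η‖ ^ 2 := by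
      have e1 : (inner ℂ (φ (star t * t) η) η : ℂ) = inner ℂ (π t η) (π t η) := by
        calc (inner ℂ (φ (star t * t) η) η : ℂ)
            = inner ℂ (φ (star t * t) (p η)) (p η) := by rw [hpη]
          _ = inner ℂ (p (φ (star t * t) (p η))) η := by rw [hmove]
          _ = inner ℂ ((p * φ (star t * t) * p) η) η := by
              simp [ContinuousLinearMap.mul_apply]
          _ = inner ℂ ((π (star t * t) * p) η) η := by rw [hblock i (star t * t)]
          _ = inner ℂ (π (star t * t) η) η := by
              rw [ContinuousLinearMap.mul_apply, hpη]
          _ = inner ℂ ((star (π t) * π t) η) η := by rw [map_mul, map_star]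
          _ = inner ℂ (π t η) (π t η) := by
              rw [ContinuousLinearMap.mul_apply, ContinuousLinearMap.star_eq_adjoint,
                ContinuousLinearMap.adjoint_inner_left]
      rw [e1]
      exact inner_self_eq_norm_sq _
    have hsch := cp_schwarz φ hu hcp t η
    rw [hval] at hsch
    -- π t η = p (φ t η)
    have hπφ : π t η = p (φ t η) := by
      calc π t η = (π t * p) η := by rw [ContinuousLinearMap.mul_apply, hpη]
        _ = (p * φ t * p) η := by rw [hblock i t]
        _ = p (φ t (p η)) := by simp [ContinuousLinearMap.mul_apply]
        _ = p (φ t η) := by rw [hpη]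
    set v := φ t η with hv
    have hle : ‖v‖ ^ 2 ≤ ‖p v‖ ^ 2 := by rw [← hπφ]; exact hsch
    have horth : (inner ℂ (p v) (v - p v) : ℂ) = 0 := by
      rw [inner_sub_right]
      have : (inner ℂ (p v) (p v) : ℂ) = inner ℂ (p v) v := by
        rw [hmove, ← ContinuousLinearMap.mul_apply, hPidem i]
      rw [this, sub_self]
    have hpyth : ‖v‖ ^ 2 = ‖p v‖ ^ 2 + ‖v - p v‖ ^ 2 := by
      calc ‖v‖ ^ 2 = ‖p v + (v - p v)‖ ^ 2 := by rw [add_sub_cancel]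
        _ = ‖p v‖ ^ 2 + 2 * RCLike.re (inner ℂ (p v) (v - p v) : ℂ) + ‖v - p v‖ ^ 2 :=
            norm_add_sq _ _
        _ = ‖p v‖ ^ 2 + ‖v - p v‖ ^ 2 := by rw [horth]; simp
    have hz : ‖v - p v‖ = 0 := by nlinarith [norm_nonneg (v - p v)]
    have : v = p v := by rwa [← sub_eq_zero, ← norm_eq_zero]
    exact this.trans hπφ.symm
  ext ξ
  have h1 : HasSum (fun i => φ t (P i ξ)) (φ t ξ) := (hPsum ξ).mapL (φ t)
  have h2 : HasSum (fun i => π t (P i ξ)) ((π t : H →L[ℂ] H) ξ) :=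
    (hPsum ξ).mapL (π t : H →L[ℂ] H)
  simp_rw [hstep] at h1
  exact h1.unique h2
end

section
/- Let φ : B → B(H) be a unital completely positive map and P ∈ B(H) an orthogonal projection such that Pφ(t)P = ρ(t)P for all t ∈ B, where ρ : B → B(PH) is a *-representation (compressed picture). Then P is invariant: (I − P)φ(t)P = 0 for every t ∈ B. -/
theorem star_phi {B H : Type*} [NormedRing B] [StarRing B] [CStarRing B]
    [NormedAlgebra ℂ B] [StarModule ℂ B] [CompleteSpace B]
    [NormedAddCommGroup H] [InnerProductSpace ℂ H] [CompleteSpace H]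
    (φ : B →L[ℂ] (H →L[ℂ] H)) (hcp : IsCompletelyPositive φ)
    (s t : B) :
    star (φ (star t * s)) = φ (star s * t) := by
  set X := φ (star s * t) with hX
  set Y := φ (star t * s) with hY
  have key : ∀ (d0 d1 : H →L[ℂ] H), IsSelfAdjoint
      (star d0 * φ (star s * s) * d0 + star d0 * X * d1 +
        star d1 * Y * d0 + star d1 * φ (star t * t) * d1) := by
    intro d0 d1
    have h := hcp 2 ![s, t] ![d0, d1]
    simp [Fin.sum_univ_two] at h
    refine IsSelfAdjoint.of_nonneg ?_
    convert h using 1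
    abel
  have hA0 : IsSelfAdjoint (φ (star s * s)) := by simpa using key 1 0
  have hA1 : IsSelfAdjoint (φ (star t * t)) := by simpa using key 0 1
  have h1 : star X + star Y = X + Y := by
    have h := key 1 1
    simp only [star_one, one_mul, mul_one] at h
    have := h.star_eq
    simp only [star_add, hA0.star_eq, hA1.star_eq] at this
    have h2 : star X + star Y + (φ (star s * s) + φ (star t * t))
        = X + Y + (φ (star s * s) + φ (star t * t)) := by
      rw [← sub_eq_zero] at this ⊢
      rw [← this]; abel_nf
    exact add_right_cancel h2
  have h2 : star Y - star X = X - Y := by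
    have h := key 1 (Complex.I • 1)
    simp only [star_one, one_mul, mul_one, star_smul, Complex.star_def, Complex.conj_I,
      smul_mul_assoc, mul_smul_comm, neg_smul, neg_mul, smul_smul, Complex.I_mul_I, neg_neg,
      one_smul, neg_one_smul, star_neg, star_mul, star_star] at h
    have := h.star_eq
    simp only [star_add, star_smul, star_neg, star_mul, star_star, star_one, Complex.star_def,
      Complex.conj_I, neg_smul, neg_mul, one_mul, mul_one, smul_mul_assoc, mul_smul_comm,
      smul_neg, smul_smul, Complex.I_mul_I, one_smul, neg_neg, hA0.star_eq, hA1.star_eq] at this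
    -- this : φ(s*s) + (-I)•star X + ... ; extract
    have h3 : Complex.I • (star Y - star X) = Complex.I • (X - Y) := by
      rw [smul_sub, smul_sub, ← sub_eq_zero]
      rw [← sub_eq_zero] at this
      rw [← this]; abel_nf
    have h4 := smul_right_injective (H →L[ℂ] H) Complex.I_ne_zero h3
    exact h4
  have := congrArg₂ (· + ·) h1 h2
  have h5 : star Y = X := by
    have : (2 : ℂ) • star Y = (2 : ℂ) • X := by
      rw [two_smul, two_smul]
      calc star Y + star Y = (star X + star Y) + (star Y - star X) := by abel
        _ = (X + Y) + (X - Y) := by rw [h1, h2]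
        _ = X + X := by abel
    exact smul_right_injective (H →L[ℂ] H) two_ne_zero this
  exact h5

/-- If `φ : B → B(H)` is a unital completely positive map, `P` an orthogonal projection such
that the compression `t ↦ P φ(t) P` is a ⋆-representation on `PH` (multiplicative,
star-preserving and unital in the compressed sense), then `(I − P) φ(t) P = 0` for all `t`. -/
theorem stmt6 {B H : Type*} [NormedRing B] [StarRing B] [CStarRing B]
    [NormedAlgebra ℂ B] [StarModule ℂ B] [CompleteSpace B]
    [NormedAddCommGroup H] [InnerProductSpace ℂ H] [CompleteSpace H]
    (φ : B →L[ℂ] (H →L[ℂ] H)) (hu : φ 1 = 1) (hcp : IsCompletelyPositive φ)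
    (P : H →L[ℂ] H) (hPsa : star P = P) (hPidem : P * P = P)
    (hmul : ∀ s t : B, P * φ (s * t) * P = (P * φ s * P) * (P * φ t * P))
    (hstar : ∀ t : B, star (P * φ t * P) = P * φ (star t) * P)
    (hone : P * φ 1 * P = P) :
    ∀ t : B, (1 - P) * φ t * P = 0 := by
  intro t
  have hsp : φ (star t) = star (φ t) := by
    have := star_phi φ hcp t 1
    simp only [star_one, one_mul, mul_one] at this
    exact this.symm
  have hP' : ∀ x : H →L[ℂ] H, P * (P * x) = P * x := fun x => by rw [← mul_assoc, hPidem]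
  have h := hcp 2 ![1, t] ![-(φ t * P), P]
  simp only [Fin.sum_univ_two, Matrix.cons_val_zero, Matrix.cons_val_one, Matrix.head_cons,
    star_neg, star_mul, hPsa, star_one, one_mul, mul_one, hu, hsp, neg_mul, mul_neg,
    neg_neg] at h
  set S := star (φ t) with hS
  have hmul' : P * (φ (star t * t) * P) = P * (S * (P * (φ t * P))) := by
    have h0 := hmul (star t) t
    rw [hsp] at h0
    simpa only [mul_assoc, hP'] using h0
  have e : star ((1 - P) * φ t * P) * ((1 - P) * φ t * P)
      = P * (S * (φ t * P)) - P * (S * (P * (φ t * P))) := by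
    simp only [star_mul, star_sub, star_one, hPsa, mul_assoc, sub_mul, mul_sub, one_mul,
      mul_one, hP', ← hS]
    abel
  have h2 : 0 ≤ P * (φ (star t * t) * P) - P * (S * (φ t * P)) := by
    convert h using 1
    simp only [mul_assoc]
    abel
  have hle : star ((1 - P) * φ t * P) * ((1 - P) * φ t * P) ≤ 0 := by
    rw [e, ← hmul', sub_nonpos]
    exact sub_nonneg.mp h2
  have hz : star ((1 - P) * φ t * P) * ((1 - P) * φ t * P) = 0 :=
    le_antisymm hle (star_mul_self_nonneg _)
  exact (CStarRing.star_mul_self_eq_zero_iff _).mp hz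
end

section
/- Let Γ : B → A be a surjective *-homomorphism from a C*-algebra B onto a C*-subalgebra A ⊆ B with Γ|_A = id_A, let π : C → A and ψ : C → B be maps from a C*-algebra C with Γ ∘ ψ = π, and let J be the smallest closed two-sided ideal of B containing the image of (ψ − π). Suppose B is generated as a C*-algebra by the image of ψ, and ψ, π are unital with π a *-homomorphism. Then ker Γ = J; that is, the kernel of Γ is exactly the closed ideal generated by {ψ(t) − π(t) : t ∈ C}. -/
section Aux

variable {B : Type*} [CStarAlgebra B] (I : TwoSidedIdeal B)

lemma aux_mem_cl_mul_left (b : B) {x : B} (hx : x ∈ closure (I : Set B)) :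
    b * x ∈ closure (I : Set B) :=
  Set.MapsTo.closure (fun y hy => I.mul_mem_left b y hy) (continuous_mul_left b) hx

lemma aux_mem_cl_mul_right (b : B) {x : B} (hx : x ∈ closure (I : Set B)) :
    x * b ∈ closure (I : Set B) :=
  Set.MapsTo.closure (fun y hy => I.mul_mem_right y b hy) (continuous_mul_right b) hx

lemma aux_mem_cl_add {x y : B} (hx : x ∈ closure (I : Set B))
    (hy : y ∈ closure (I : Set B)) : x + y ∈ closure (I : Set B) :=
  map_mem_closure₂ continuous_add hx hy fun _ ha _ hb => I.add_mem ha hb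

/-- The closure of a two-sided ideal in a C⋆-algebra is closed under `star`. -/
lemma aux_mem_cl_star {x : B} (hx : x ∈ closure (I : Set B)) :
    star x ∈ closure (I : Set B) := by
  set K := closure (I : Set B) with hK
  have ha : IsSelfAdjoint (star x * x) := IsSelfAdjoint.star_mul_self x
  set a := star x * x with haa
  have haK : a ∈ K := aux_mem_cl_mul_left I (star x) hx
  have hspec : ∀ t ∈ spectrum ℝ a, 0 ≤ t := spectrum_star_mul_self_nonneg
  have : star x ∈ closure K := by
    rw [Metric.mem_closure_iff]
    intro δ hδ
    set ε : ℝ := δ ^ 2 with hε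
    have hε0 : 0 < ε := by positivity
    have hne : ∀ t ∈ spectrum ℝ a, t + ε ≠ 0 := by
      intro t ht
      have := hspec t ht
      positivity
    have hinv : ContinuousOn (fun t : ℝ => (t + ε)⁻¹) (spectrum ℝ a) :=
      ContinuousOn.inv₀ (by fun_prop) hne
    set f := fun t : ℝ => t * (t + ε)⁻¹ with hf
    have hcont : ContinuousOn f (spectrum ℝ a) := continuousOn_id.mul hinv
    have hfa : cfc f a ∈ K := by
      have h1 : cfc f a = cfc (fun t : ℝ => t) a * cfc (fun t : ℝ => (t + ε)⁻¹) a :=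
        cfc_mul _ _ a (by fun_prop) hinv
      rw [cfc_id' ℝ a] at h1
      rw [h1]
      exact aux_mem_cl_mul_right I _ haK
    refine ⟨cfc f a * star x, aux_mem_cl_mul_right I (star x) hfa, ?_⟩
    -- now the norm estimate
    set e := cfc (fun t : ℝ => 1 - f t) a with he'
    have he : e = 1 - cfc f a := by
      rw [he', cfc_sub (fun _ : ℝ => (1 : ℝ)) f a (by fun_prop) hcont]
      congr 1
      exact cfc_one ℝ a
    have hes : IsSelfAdjoint e := cfc_predicate _ a
    have hd : star x - cfc f a * star x = e * star x := by
      rw [he, sub_mul, one_mul]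
    have hsq : (e * star x) * star (e * star x) = e * a * e := by
      rw [star_mul, star_star, hes.star_eq, haa]
      noncomm_ring
    have hcfc3 : e * a * e = cfc (fun t : ℝ => (1 - f t) * t * (1 - f t)) a := by
      rw [cfc_mul (fun t : ℝ => (1 - f t) * t) (fun t : ℝ => 1 - f t) a
        (by exact (continuousOn_const.sub hcont).mul continuousOn_id) (continuousOn_const.sub hcont),
        cfc_mul (fun t : ℝ => 1 - f t) (fun t : ℝ => t) a (continuousOn_const.sub hcont)
        (by fun_prop), cfc_id' ℝ a, he']
    have hbound : ‖e * a * e‖ ≤ ε / 4 := by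
      rw [hcfc3]
      refine norm_cfc_le (by positivity) ?_
      intro t ht
      have ht0 : 0 ≤ t := hspec t ht
      have htε : (0:ℝ) < t + ε := by positivity
      have h3 : 1 - f t = ε / (t + ε) := by
        rw [hf]
        field_simp
        ring
      rw [h3, Real.norm_eq_abs, abs_of_nonneg (by positivity),
        div_mul_eq_mul_div, div_mul_div_comm,
        div_le_div_iff₀ (by positivity) (by norm_num)]
      nlinarith [sq_nonneg (t - ε)]
    have hnorm : ‖star x - cfc f a * star x‖ * ‖star x - cfc f a * star x‖ ≤ ε / 4 := by
      rw [← CStarRing.norm_self_mul_star, hd, hsq]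
      exact hbound
    rw [dist_eq_norm]
    nlinarith [norm_nonneg (star x - cfc f a * star x), hδ]
  rwa [closure_closure] at this

end Aux

/-- Let `Γ : B → A` be a surjective ⋆-homomorphism onto a C*-subalgebra `A ⊆ B` fixing `A`
pointwise, `π : C → A` a unital ⋆-homomorphism and `ψ : C → B` a unital linear map with
`Γ ∘ ψ = π`, and suppose `B` is generated as a C*-algebra by the image of `ψ`.  Then
`ker Γ` is exactly the smallest closed two-sided ideal of `B` containing
`{ψ(t) − π(t) : t ∈ C}`, i.e. the closure of the two-sided ideal spanned by this set. -/
theorem stmt7 {C B : Type*} [NormedRing C] [StarRing C] [CStarRing C]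
    [NormedAlgebra ℂ C] [StarModule ℂ C] [CompleteSpace C]
    [NormedRing B] [StarRing B] [CStarRing B]
    [NormedAlgebra ℂ B] [StarModule ℂ B] [CompleteSpace B]
    (A : StarSubalgebra ℂ B)
    (Γ : B →⋆ₐ[ℂ] B) (hΓrange : ∀ b, Γ b ∈ A) (hΓfix : ∀ a ∈ A, Γ a = a)
    (ψ : C →ₗ[ℂ] B) (hψ1 : ψ 1 = 1)
    (π : C →⋆ₐ[ℂ] B) (hπ1 : π 1 = 1) (hπA : ∀ t, π t ∈ A)
    (hfact : ∀ t, Γ (ψ t) = π t)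
    (hgen : (StarAlgebra.adjoin ℂ (Set.range ψ)).topologicalClosure = ⊤) :
    {x : B | Γ x = 0} =
      closure ((TwoSidedIdeal.span (Set.range fun t => ψ t - π t) : TwoSidedIdeal B) : Set B) := by
  letI : CStarAlgebra B := { }
  set s : Set B := Set.range fun t => ψ t - π t with hs
  set I : TwoSidedIdeal B := TwoSidedIdeal.span s with hI
  have hΓcont : Continuous Γ :=
    AddMonoidHomClass.continuous_of_bound Γ 1
      (fun x => by simpa using NonUnitalStarAlgHom.norm_apply_le Γ x)
  have hkerclosed : IsClosed {x : B | Γ x = 0} := by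
    have : {x : B | Γ x = 0} = Γ ⁻¹' {0} := rfl
    rw [this]
    exact IsClosed.preimage hΓcont isClosed_singleton
  -- the kernel as a two-sided ideal
  have hsker : s ⊆ {x : B | Γ x = 0} := by
    rintro _ ⟨t, rfl⟩
    simp only [Set.mem_setOf_eq, map_sub, hfact, hΓfix _ (hπA t), sub_self]
  have hIker : (I : Set B) ⊆ {x : B | Γ x = 0} := by
    set J : TwoSidedIdeal B := TwoSidedIdeal.mk' {x : B | Γ x = 0} (by simp)
      (fun {a b} ha hb => by simp only [Set.mem_setOf_eq] at *; rw [map_add, ha, hb, add_zero])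
      (fun {a} ha => by simp only [Set.mem_setOf_eq] at *; rw [map_neg, ha, neg_zero])
      (fun {a b} hb => by simp only [Set.mem_setOf_eq] at *; rw [map_mul, hb, mul_zero])
      (fun {a b} ha => by simp only [Set.mem_setOf_eq] at *; rw [map_mul, ha, zero_mul]) with hJ
    intro x hx
    have hxJ : x ∈ J := TwoSidedIdeal.mem_span_iff.mp hx J
      (fun y hy => by rw [hJ, SetLike.mem_coe, TwoSidedIdeal.mem_mk']; exact hsker hy)
    rwa [hJ, TwoSidedIdeal.mem_mk'] at hxJ
  have hKker : closure (I : Set B) ⊆ {x : B | Γ x = 0} :=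
    closure_minimal hIker hkerclosed
  -- the key: every element of B differs from its image under Γ by an element of the closure of I
  have hS : ∀ b : B, b - Γ b ∈ closure (I : Set B) := by
    have hadj : ∀ b ∈ StarAlgebra.adjoin ℂ (Set.range ψ),
        b - Γ b ∈ closure (I : Set B) := by
      intro b hb
      induction hb using StarAlgebra.adjoin_induction with
      | mem x hx =>
        obtain ⟨t, rfl⟩ := hx
        have : ψ t - Γ (ψ t) = ψ t - π t := by rw [hfact]
        rw [this]
        exact subset_closure (TwoSidedIdeal.subset_span ⟨t, rfl⟩)
      | algebraMap r =>
        rw [AlgHomClass.commutes, sub_self]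
        exact subset_closure I.zero_mem
      | add x y hx hy ihx ihy =>
        have : x + y - Γ (x + y) = (x - Γ x) + (y - Γ y) := by
          rw [map_add]; abel
        rw [this]
        exact aux_mem_cl_add I ihx ihy
      | mul x y hx hy ihx ihy =>
        have : x * y - Γ (x * y) = x * (y - Γ y) + (x - Γ x) * Γ y := by
          rw [map_mul]; noncomm_ring
        rw [this]
        exact aux_mem_cl_add I (aux_mem_cl_mul_left I x ihy)
          (aux_mem_cl_mul_right I (Γ y) ihx)
      | star x hx ihx =>
        have : star x - Γ (star x) = star (x - Γ x) := by
          rw [map_star, star_sub]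
        rw [this]
        exact aux_mem_cl_star I ihx
    intro b
    have hbmem : b ∈ closure (StarAlgebra.adjoin ℂ (Set.range ψ) : Set B) := by
      rw [← StarSubalgebra.topologicalClosure_coe, hgen]
      trivial
    have hTclosed : IsClosed {b : B | b - Γ b ∈ closure (I : Set B)} := by
      have : {b : B | b - Γ b ∈ closure (I : Set B)} =
          (fun b => b - Γ b) ⁻¹' closure (I : Set B) := rfl
      rw [this]
      exact IsClosed.preimage (continuous_id.sub hΓcont) isClosed_closure
    exact closure_minimal hadj hTclosed hbmem
  -- conclude
  ext x
  constructor
  · intro hx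
    have := hS x
    rwa [hx, sub_zero] at this
  · exact fun hx => hKker hx
end

section
/- Let (ψ_α) be a net of unital completely positive maps from a unital C*-algebra A to B(H) that converges to a *-representation π pointwise in the weak operator topology on a self-adjoint subset M with M ∪ {1} generating A, and suppose additionally ψ_α(m*m) → π(m*m) and ψ_α(mm*) → π(mm*) weakly for m ∈ M. Then ψ_α(m) → π(m) in the strong operator topology for every m ∈ M. -/
open Filter
open scoped InnerProductSpace ComplexStarModule

section
variable {A H : Type*} [NormedRing A] [StarRing A] [CStarRing A]
    [NormedAlgebra ℂ A] [StarModule ℂ A] [CompleteSpace A]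
    [NormedAddCommGroup H] [InnerProductSpace ℂ H] [CompleteSpace H]

lemma cp_nonneg (φ : A →L[ℂ] (H →L[ℂ] H)) (hφ : IsCompletelyPositive φ) (b : A) :
    0 ≤ φ (star b * b) := by
  simpa using hφ 1 (fun _ => b) (fun _ => 1)

lemma cp_star_preserving (φ : A →L[ℂ] (H →L[ℂ] H)) (hφ : IsCompletelyPositive φ) (a : A) :
    φ (star a) = star (φ a) := by
  letI : CStarAlgebra A := ⟨⟩
  letI : PartialOrder A := CStarAlgebra.spectralOrder A
  letI : StarOrderedRing A := CStarAlgebra.spectralOrderedRing A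
  have key : ∀ y : A, 0 ≤ y → IsSelfAdjoint (φ y) := by
    intro y hy
    have h : y = star (CFC.sqrt y) * (CFC.sqrt y) := by
      rw [(IsSelfAdjoint.of_nonneg (CFC.sqrt_nonneg y)).star_eq, CFC.sqrt_mul_sqrt_self y hy]
    rw [h]
    exact ((ContinuousLinearMap.nonneg_iff_isPositive _).mp (cp_nonneg φ hφ _)).isSelfAdjoint
  have hsa : ∀ x : A, IsSelfAdjoint x → IsSelfAdjoint (φ x) := by
    intro x hx
    have h1 : φ x = φ (x⁺) - φ (x⁻) := by rw [← map_sub, CFC.posPart_sub_negPart x hx]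
    rw [h1]
    exact (key _ (CFC.posPart_nonneg x)).sub (key _ (CFC.negPart_nonneg x))
  have ha : a = (ℜ a : A) + Complex.I • (ℑ a : A) := (realPart_add_I_smul_imaginaryPart a).symm
  have hsta : star a = (ℜ a : A) - Complex.I • (ℑ a : A) := by
    conv_lhs => rw [ha]
    rw [star_add, star_smul, (ℜ a).property.star_eq, (ℑ a).property.star_eq]
    simp [Complex.star_def, Complex.conj_I, sub_eq_add_neg, neg_smul]
  have h2 : star (φ a) = φ (ℜ a : A) - Complex.I • φ (ℑ a : A) := by
    conv_lhs => rw [ha]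
    rw [map_add, map_smul, star_add, star_smul,
      (hsa _ (ℜ a).property).star_eq, (hsa _ (ℑ a).property).star_eq]
    simp [Complex.star_def, Complex.conj_I, sub_eq_add_neg, neg_smul]
  rw [hsta, map_sub, map_smul, h2]
end

section
variable {A H : Type*} [NormedRing A] [StarRing A] [CStarRing A]
    [NormedAlgebra ℂ A] [StarModule ℂ A] [CompleteSpace A]
    [NormedAddCommGroup H] [InnerProductSpace ℂ H] [CompleteSpace H]

lemma cp_schwarz_s10 (φ : A →L[ℂ] (H →L[ℂ] H)) (hu : φ 1 = 1) (hφ : IsCompletelyPositive φ)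
    (m : A) : 0 ≤ φ (star m * m) - star (φ m) * (φ m) := by
  have h := hφ 2 ![1, m] ![-(φ m), 1]
  have e : (∑ i, ∑ j, star ((![-(φ m), 1] : Fin 2 → (H →L[ℂ] H)) i) *
      φ (star ((![1, m] : Fin 2 → A) i) * (![1, m] : Fin 2 → A) j) *
      (![-(φ m), 1] : Fin 2 → (H →L[ℂ] H)) j)
      = φ (star m * m) - star (φ m) * (φ m) := by
    simp [Fin.sum_univ_two, hu, cp_star_preserving φ hφ m, mul_neg, neg_mul, star_neg]
    abel
  rw [e] at h
  exact h

lemma cp_schwarz_vec (φ : A →L[ℂ] (H →L[ℂ] H)) (hu : φ 1 = 1) (hφ : IsCompletelyPositive φ)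
    (m : A) (ξ : H) : ‖φ m ξ‖ ^ 2 ≤ RCLike.re ⟪φ (star m * m) ξ, ξ⟫_ℂ := by
  have h := ((ContinuousLinearMap.nonneg_iff_isPositive _).mp
    (cp_schwarz_s10 φ hu hφ m)).inner_nonneg_left ξ
  rw [ContinuousLinearMap.sub_apply, inner_sub_left, RCLike.nonneg_iff, map_sub] at h
  replace h := h.1
  have e : ⟪(star (φ m) * (φ m)) ξ, ξ⟫_ℂ = ⟪φ m ξ, φ m ξ⟫_ℂ := by
    rw [ContinuousLinearMap.mul_apply, ContinuousLinearMap.star_eq_adjoint,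
      ContinuousLinearMap.adjoint_inner_left]
  rw [e] at h
  have : RCLike.re ⟪φ m ξ, φ m ξ⟫_ℂ = ‖φ m ξ‖ ^ 2 := by
    rw [inner_self_eq_norm_sq]
  linarith
end

/-- If `(ψ_α)` is a net of unital completely positive maps `A → B(H)` converging to a
⋆-representation `π` pointwise in the weak operator topology on a self-adjoint subset `M`
generating `A` (together with `1`), and in addition `ψ_α(m*m) → π(m*m)` and
`ψ_α(mm*) → π(mm*)` weakly for `m ∈ M`, then `ψ_α(m) → π(m)` in the strong operator
topology for every `m ∈ M`. -/
theorem stmt10 {A H ι : Type*} [NormedRing A] [StarRing A] [CStarRing A]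
    [NormedAlgebra ℂ A] [StarModule ℂ A] [CompleteSpace A]
    [NormedAddCommGroup H] [InnerProductSpace ℂ H] [CompleteSpace H]
    [Preorder ι] [IsDirected ι (· ≤ ·)] [Nonempty ι]
    (ψ : ι → A →L[ℂ] (H →L[ℂ] H)) (hψu : ∀ α, ψ α 1 = 1)
    (hψcp : ∀ α, IsCompletelyPositive (ψ α))
    (π : A →⋆ₐ[ℂ] (H →L[ℂ] H)) (hπu : π 1 = 1)
    (M : Set A) (hMstar : ∀ m ∈ M, star m ∈ M)
    (hgen : (StarAlgebra.adjoin ℂ M).topologicalClosure = ⊤)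
    (hwot : ∀ m ∈ M, ∀ ξ η : H,
      Tendsto (fun α => ⟪(ψ α m) ξ, η⟫_ℂ) atTop (nhds ⟪π m ξ, η⟫_ℂ))
    (hwot_sq : ∀ m ∈ M, ∀ ξ η : H,
      Tendsto (fun α => ⟪(ψ α (star m * m)) ξ, η⟫_ℂ) atTop (nhds ⟪π (star m * m) ξ, η⟫_ℂ))
    (hwot_sq' : ∀ m ∈ M, ∀ ξ η : H,
      Tendsto (fun α => ⟪(ψ α (m * star m)) ξ, η⟫_ℂ) atTop (nhds ⟪π (m * star m) ξ, η⟫_ℂ)) :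
    ∀ m ∈ M, ∀ ξ : H, Tendsto (fun α => (ψ α m) ξ) atTop (nhds ((π m) ξ)) := by
  
  intro m hm ξ
  set P := π m with hP
  have hPsq : RCLike.re ⟪π (star m * m) ξ, ξ⟫_ℂ = ‖P ξ‖ ^ 2 := by
    rw [map_mul, map_star, ContinuousLinearMap.mul_apply,
      ContinuousLinearMap.star_eq_adjoint, ContinuousLinearMap.adjoint_inner_left,
      inner_self_eq_norm_sq]
  have h1 : Tendsto (fun α => RCLike.re ⟪(ψ α (star m * m)) ξ, ξ⟫_ℂ) atTop
      (nhds (‖P ξ‖ ^ 2)) := by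
    have h := (RCLike.continuous_re.tendsto _).comp (hwot_sq m hm ξ ξ)
    rwa [Function.comp_def, hPsq] at h
  have h2 : Tendsto (fun α => RCLike.re ⟪(ψ α m) ξ, P ξ⟫_ℂ) atTop (nhds (‖P ξ‖ ^ 2)) := by
    have h := (RCLike.continuous_re.tendsto _).comp (hwot m hm ξ (P ξ))
    rwa [Function.comp_def, inner_self_eq_norm_sq] at h
  have hg : Tendsto (fun α => RCLike.re ⟪(ψ α (star m * m)) ξ, ξ⟫_ℂ
      - 2 * RCLike.re ⟪(ψ α m) ξ, P ξ⟫_ℂ + ‖P ξ‖ ^ 2) atTop (nhds 0) := by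
    have h := (h1.sub (h2.const_mul 2)).add_const (‖P ξ‖ ^ 2)
    have e : ‖P ξ‖ ^ 2 - 2 * ‖P ξ‖ ^ 2 + ‖P ξ‖ ^ 2 = 0 := by ring
    rw [e] at h
    exact h
  have hle : ∀ α, ‖(ψ α m) ξ - P ξ‖ ^ 2 ≤ RCLike.re ⟪(ψ α (star m * m)) ξ, ξ⟫_ℂ
      - 2 * RCLike.re ⟪(ψ α m) ξ, P ξ⟫_ℂ + ‖P ξ‖ ^ 2 := by
    intro α
    have hs := cp_schwarz_vec (ψ α) (hψu α) (hψcp α) m ξ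
    have hn : ‖(ψ α m) ξ - P ξ‖ ^ 2
        = ‖(ψ α m) ξ‖ ^ 2 - 2 * RCLike.re ⟪(ψ α m) ξ, P ξ⟫_ℂ + ‖P ξ‖ ^ 2 :=
      norm_sub_sq _ _
    linarith
  have hsq : Tendsto (fun α => ‖(ψ α m) ξ - P ξ‖ ^ 2) atTop (nhds 0) :=
    squeeze_zero (fun α => sq_nonneg _) hle hg
  rw [tendsto_iff_norm_sub_tendsto_zero]
  have := hsq.sqrt
  simpa [Real.sqrt_sq (norm_nonneg _)] using this
end
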